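/- Let G be a symmetric entrywise nonnegative N×N real matrix with combinatorial Laplacian L = D - G, and let w ∈ ℂ^N. Define p ∈ ℝ^N by p_i = |w_i|². Then pᵀ L p ≤ 4 ‖w‖₂² · (w^H L w). -/

import Mathlib

open Matrix ComplexOrder Filter

noncomputable def enorm {N : ℕ} (v : Fin N → ℝ) : ℝ := Real.sqrt (∑ i, v i ^ 2)

noncomputable def specNorm {N : ℕ} (G : Matrix (Fin N) (Fin N) ℝ) : ℝ :=
  ‖Matrix.toEuclideanCLM (𝕜 := ℝ) G‖

noncomputable def lamMax {N : ℕ} (A : Matrix (Fin N) (Fin N) ℝ) : ℝ :=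
  sSup {t : ℝ | Module.End.HasEigenvalue (Matrix.toLin' A) t}

noncomputable def lamMaxC {N : ℕ} (A : Matrix (Fin N) (Fin N) ℂ) : ℝ :=
  sSup {t : ℝ | Module.End.HasEigenvalue (Matrix.toLin' A) (t : ℂ)}

lemma quadA {N : ℕ} (G : Matrix (Fin N) (Fin N) ℝ) (hsym : G.IsSymm) (x : Fin N → ℝ) :
    x ⬝ᵥ (Matrix.diagonal (fun i => ∑ j, G i j) - G).mulVec x
      = (1/2) * ∑ i, ∑ j, G i j * (x i - x j)^2 := by
  have hG : ∀ i j, G j i = G i j := fun i j => hsym.apply i j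
  have key : ∑ i, ∑ j, G i j * x j ^ 2 = ∑ i, ∑ j, G i j * x i ^ 2 := by
    rw [Finset.sum_comm]
    exact Finset.sum_congr rfl fun i _ => Finset.sum_congr rfl fun j _ => by rw [hG]
  have lhs : x ⬝ᵥ (Matrix.diagonal (fun i => ∑ j, G i j) - G).mulVec x
      = (∑ i, ∑ j, G i j * x i ^ 2) - ∑ i, ∑ j, G i j * (x i * x j) := by
    rw [sub_mulVec, dotProduct_sub]
    congr 1
    · simp only [dotProduct, mulVec_diagonal]
      refine Finset.sum_congr rfl fun i _ => ?_
      rw [← mul_assoc, mul_comm (x i), mul_assoc, Finset.sum_mul]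
      exact Finset.sum_congr rfl fun j _ => by ring
    · simp only [dotProduct, mulVec, Finset.mul_sum]
      exact Finset.sum_congr rfl fun i _ => Finset.sum_congr rfl fun j _ => by ring
  rw [lhs]
  have rhs : ∑ i, ∑ j, G i j * (x i - x j)^2
      = (∑ i, ∑ j, G i j * x i ^ 2) - 2 * ∑ i, ∑ j, G i j * (x i * x j)
        + ∑ i, ∑ j, G i j * x j ^ 2 := by
    simp only [← Finset.sum_add_distrib, ← Finset.sum_sub_distrib, Finset.mul_sum]
    exact Finset.sum_congr rfl fun i _ => Finset.sum_congr rfl fun j _ => by ring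
  rw [rhs, key]
  ring

lemma reDecomp {N : ℕ} (M : Matrix (Fin N) (Fin N) ℝ) (w : Fin N → ℂ) :
    (star w ⬝ᵥ (M.map Complex.ofReal).mulVec w).re
      = (fun i => (w i).re) ⬝ᵥ M.mulVec (fun i => (w i).re)
        + (fun i => (w i).im) ⬝ᵥ M.mulVec (fun i => (w i).im) := by
  simp only [dotProduct, mulVec, Matrix.map_apply, Pi.star_apply, RCLike.star_def,
    Complex.re_sum, Complex.im_sum, Complex.mul_re, Complex.mul_im, Complex.conj_re,
    Complex.conj_im, Complex.ofReal_re, Complex.ofReal_im, zero_mul, sub_zero, neg_mul,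
    Finset.mul_sum, ← Finset.sum_add_distrib]
  refine Finset.sum_congr rfl fun i _ => ?_
  refine Finset.sum_congr rfl fun j _ => by ring

/-- Laplacian energy of the squared-modulus profile: `pᵀ L p ≤ 4 ‖w‖₂² (wᴴ L w)`. -/
theorem laplacian_energy_modulus_sq {N : ℕ} (G : Matrix (Fin N) (Fin N) ℝ)
    (hsym : G.IsSymm) (hnn : ∀ i j, 0 ≤ G i j) (w : Fin N → ℂ) :
    (fun i => ‖w i‖ ^ 2) ⬝ᵥ
        (Matrix.diagonal (fun i => ∑ j, G i j) - G).mulVec (fun i => ‖w i‖ ^ 2) ≤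
      4 * (∑ i, ‖w i‖ ^ 2) *
        (star w ⬝ᵥ ((Matrix.diagonal (fun i => ∑ j, G i j) - G).map Complex.ofReal).mulVec w).re := by
  set p : Fin N → ℝ := fun i => ‖w i‖ ^ 2 with hp
  set a : Fin N → ℝ := fun i => (w i).re with ha
  set b : Fin N → ℝ := fun i => (w i).im with hb
  set S : ℝ := ∑ i, ‖w i‖ ^ 2 with hS
  have hpab : ∀ i, p i = a i ^ 2 + b i ^ 2 := by
    intro i
    simp only [hp, ha, hb, Complex.sq_norm, Complex.normSq_apply]
    ring
  have hpS : ∀ i, p i ≤ S := by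
    intro i
    exact Finset.single_le_sum (f := p) (fun j _ => by positivity) (Finset.mem_univ i)
  have hL := quadA G hsym p
  have hRa := quadA G hsym a
  have hRb := quadA G hsym b
  have hre := reDecomp (Matrix.diagonal (fun i => ∑ j, G i j) - G) w
  rw [hL, hre]
  have ha' : (fun i => (w i).re) = a := rfl
  have hb' : (fun i => (w i).im) = b := rfl
  rw [ha', hb', hRa, hRb]
  have step : ∀ i j, G i j * (p i - p j)^2
      ≤ 4 * S * (G i j * (a i - a j)^2) + 4 * S * (G i j * (b i - b j)^2) := by
    intro i j
    have h1 : (p i - p j)^2 ≤ 2*(p i + p j)*((a i - a j)^2+(b i - b j)^2) := by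
      rw [hpab i, hpab j]
      nlinarith [sq_nonneg ((a i - a j)*(b i + b j) - (b i - b j)*(a i + a j)),
        sq_nonneg (a i + a j), sq_nonneg (b i + b j), sq_nonneg (a i - a j), sq_nonneg (b i - b j)]
    have hg := hnn i j
    have hq : (0:ℝ) ≤ (a i - a j)^2+(b i - b j)^2 := by positivity
    have h2 := hpS i
    have h3 := hpS j
    nlinarith [mul_le_mul_of_nonneg_left h1 hg, mul_nonneg hg hq]
  have sum_step : ∑ i, ∑ j, G i j * (p i - p j)^2
      ≤ ∑ i, ∑ j, (4 * S * (G i j * (a i - a j)^2) + 4 * S * (G i j * (b i - b j)^2)) :=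
    Finset.sum_le_sum fun i _ => Finset.sum_le_sum fun j _ => step i j
  have expand : ∑ i, ∑ j, (4 * S * (G i j * (a i - a j)^2) + 4 * S * (G i j * (b i - b j)^2))
      = 4 * S * (∑ i, ∑ j, G i j * (a i - a j)^2) + 4 * S * (∑ i, ∑ j, G i j * (b i - b j)^2) := by
    simp only [Finset.sum_add_distrib, Finset.mul_sum]
  rw [expand] at sum_step
  linarith
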